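/- The ℤ-linear map H ⊗ (⟨⟨ω⟩⟩ ∩ 𝔏₅) → ⟨⟨ω⟩⟩ ∩ 𝔏₆ defined on elementary tensors by h ⊗ u ↦ [h,u] is surjective. -/

import Mathlib

open scoped TensorProduct

noncomputable section

/-- The free Lie ring `𝔏` on the `2g` generators. -/
abbrev L (g : ℕ) : Type := FreeLieAlgebra ℤ (Fin (2 * g))

/-- The free abelian group `H` of rank `2g`. -/
abbrev H (g : ℕ) : Type := Fin (2 * g) → ℤ

/-- The canonical inclusion of `H` into `𝔏` as the degree `1` part. -/
def toL (g : ℕ) : H g →ₗ[ℤ] L g where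
  toFun v := ∑ i, v i • FreeLieAlgebra.of ℤ i
  map_add' x y := by simp [add_smul, Finset.sum_add_distrib]
  map_smul' c x := by simp [Finset.smul_sum, smul_smul]

/-- Index of the basis element `aᵢ`. -/
def aIdx (g : ℕ) (i : Fin g) : Fin (2 * g) := ⟨i.1, by have := i.2; omega⟩

/-- Index of the basis element `bᵢ`. -/
def bIdx (g : ℕ) (i : Fin g) : Fin (2 * g) := ⟨g + i.1, by have := i.2; omega⟩

/-- The basis element `aᵢ` of `H`. -/
def aV (g : ℕ) (i : Fin g) : H g := Pi.single (aIdx g i) 1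

/-- The basis element `bᵢ` of `H`. -/
def bV (g : ℕ) (i : Fin g) : H g := Pi.single (bIdx g i) 1

/-- The symplectic pairing `ω : H × H → ℤ`, with `ω(aᵢ,bⱼ) = δᵢⱼ`, `ω(aᵢ,aⱼ) = ω(bᵢ,bⱼ) = 0`. -/
def omegaPair (g : ℕ) (x y : H g) : ℤ :=
  ∑ i : Fin g, (x (aIdx g i) * y (bIdx g i) - x (bIdx g i) * y (aIdx g i))

/-- `IsBrkt g k x` means that `x` is a `k`-fold Lie bracket of elements of `H`. -/
inductive IsBrkt (g : ℕ) : ℕ → L g → Prop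
  | of (v : H g) : IsBrkt g 1 (toL g v)
  | lie {m n : ℕ} {x y : L g} : IsBrkt g m x → IsBrkt g n y → IsBrkt g (m + n) ⁅x, y⁆

/-- `𝔏ₖ`, the degree-`k` homogeneous component of the free Lie ring:
the `ℤ`-span of all `k`-fold Lie brackets of elements of `H`. -/
def homog (g k : ℕ) : Submodule ℤ (L g) := Submodule.span ℤ {x | IsBrkt g k x}

lemma toL_mem (g : ℕ) (v : H g) : toL g v ∈ homog g 1 :=
  Submodule.subset_span (IsBrkt.of v)

lemma lie_mem_homog {g m n : ℕ} {x y : L g} (hx : x ∈ homog g m) (hy : y ∈ homog g n) :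
    ⁅x, y⁆ ∈ homog g (m + n) := by
  induction hx using Submodule.span_induction with
  | mem a ha =>
    induction hy using Submodule.span_induction with
    | mem b hb => exact Submodule.subset_span (ha.lie hb)
    | zero => simp
    | add b c hb hc ihb ihc => rw [lie_add]; exact Submodule.add_mem _ ihb ihc
    | smul t b hb ihb => rw [lie_smul]; exact Submodule.smul_mem _ t ihb
  | zero => simp
  | add a c ha hc iha ihc => rw [add_lie]; exact Submodule.add_mem _ iha ihc
  | smul t a ha iha => rw [smul_lie]; exact Submodule.smul_mem _ t iha

/-- `[[a,b],c]` as an element of `𝔏₃`. -/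
def trip (g : ℕ) (a b c : H g) : ↥(homog g 3) :=
  ⟨⁅⁅toL g a, toL g b⁆, toL g c⁆,
    Submodule.subset_span (((IsBrkt.of a).lie (IsBrkt.of b)).lie (IsBrkt.of c))⟩

/-- The symplectic element `ω = Σᵢ [aᵢ, bᵢ] ∈ 𝔏₂`. -/
def omegaL (g : ℕ) : L g := ∑ i : Fin g, ⁅toL g (aV g i), toL g (bV g i)⁆

lemma omegaL_mem (g : ℕ) : omegaL g ∈ homog g 2 :=
  Submodule.sum_mem _ fun i _ =>
    Submodule.subset_span ((IsBrkt.of (aV g i)).lie (IsBrkt.of (bV g i)))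

/-- The Lie ideal `⟨⟨ω⟩⟩` of `𝔏` generated by `ω`. -/
def omegaIdeal (g : ℕ) : LieIdeal ℤ (L g) := LieSubmodule.lieSpan ℤ (L g) {omegaL g}

end

noncomputable section

-- auxiliary: grading projections
def phiX (g : ℕ) : L g →ₗ⁅ℤ⁆ (Polynomial ℤ ⊗[ℤ] L g) :=
  FreeLieAlgebra.lift ℤ (fun i => (Polynomial.X : Polynomial ℤ) ⊗ₜ FreeLieAlgebra.of ℤ i)

lemma phiX_toL (g : ℕ) (v : H g) :
    phiX g (toL g v) = (Polynomial.X : Polynomial ℤ) ⊗ₜ toL g v := by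
  rw [show phiX g (toL g v) = (phiX g).toLinearMap (toL g v) from rfl]
  simp only [toL, LinearMap.coe_mk, AddHom.coe_mk, map_sum, map_smul]
  rw [TensorProduct.tmul_sum]
  rw [show ((phiX g).toLinearMap : L g → _) = phiX g from rfl]
  refine Finset.sum_congr rfl fun i _ => ?_
  rw [phiX]
  erw [FreeLieAlgebra.lift_of_apply]
  rw [TensorProduct.tmul_smul]

lemma phiX_homog {g k : ℕ} {x : L g} (hx : x ∈ homog g k) :
    phiX g x = (Polynomial.X ^ k : Polynomial ℤ) ⊗ₜ x := by
  induction hx using Submodule.span_induction with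
  | mem a ha =>
    induction ha with
    | of v => rw [phiX_toL, pow_one]
    | @lie m n y z hy hz ihy ihz =>
      rw [LieHom.map_lie, ihy, ihz, LieAlgebra.ExtendScalars.bracket_tmul, ← pow_add]
  | zero => simp
  | add a b ha hb iha ihb => rw [map_add, iha, ihb, TensorProduct.tmul_add]
  | smul t a ha iha => rw [map_smul, iha, TensorProduct.tmul_smul]

def piK (g k : ℕ) : L g →ₗ[ℤ] L g :=
  (TensorProduct.lid ℤ (L g)).toLinearMap ∘ₗ
    (TensorProduct.map (Polynomial.lcoeff ℤ k) LinearMap.id) ∘ₗ (phiX g).toLinearMap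

lemma piK_homog {g k m : ℕ} {x : L g} (hx : x ∈ homog g k) :
    piK g m x = if m = k then x else 0 := by
  have : piK g m x = (Polynomial.X ^ k : Polynomial ℤ).coeff m • x := by
    show (TensorProduct.lid ℤ (L g)) ((TensorProduct.map (Polynomial.lcoeff ℤ m) LinearMap.id) (phiX g x)) = _
    simp only [piK, LinearMap.coe_comp, Function.comp_apply, LieHom.coe_toLinearMap,
      phiX_homog hx, TensorProduct.map_tmul, Polynomial.lcoeff_apply, LinearMap.id_coe, id_eq,
      LinearEquiv.coe_coe, TensorProduct.lid_tmul]
  rw [this, Polynomial.coeff_X_pow]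
  split <;> simp


namespace Stmt8Aux

/-- Filtration of the ideal `⟨⟨ω⟩⟩` by "depth". -/
def Cn (g : ℕ) : ℕ → Submodule ℤ (L g)
  | 0 => Submodule.span ℤ {omegaL g}
  | n + 1 => Submodule.span ℤ {x | ∃ h u, u ∈ Cn g n ∧ x = ⁅toL g h, u⁆}

lemma Cn_le_homog (g : ℕ) : ∀ n, Cn g n ≤ homog g (n + 2)
  | 0 => by
    rw [Cn, Submodule.span_le]
    rintro x rfl
    exact omegaL_mem g
  | n + 1 => by
    rw [Cn, Submodule.span_le]
    rintro x ⟨h, u, hu, rfl⟩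
    have := lie_mem_homog (toL_mem g h) (Cn_le_homog g n hu)
    rwa [show 1 + (n + 2) = n + 1 + 2 by omega] at this

lemma Cn_le_ideal (g : ℕ) : ∀ n, Cn g n ≤ (omegaIdeal g).toSubmodule
  | 0 => by
    rw [Cn, Submodule.span_le]
    rintro x rfl
    exact LieSubmodule.subset_lieSpan rfl
  | n + 1 => by
    rw [Cn, Submodule.span_le]
    rintro x ⟨h, u, hu, rfl⟩
    exact (omegaIdeal g).lie_mem (Cn_le_ideal g n hu)

/-- The sum of the filtration. -/
def Nsup (g : ℕ) : Submodule ℤ (L g) := ⨆ n, Cn g n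

lemma toL_single (g : ℕ) (i : Fin (2 * g)) :
    toL g (Pi.single i (1 : ℤ)) = FreeLieAlgebra.of ℤ i := by
  simp [toL, Pi.single_apply, ite_smul]

lemma lie_of_mem_Nsup (g : ℕ) (i : Fin (2 * g)) {u : L g} (hu : u ∈ Nsup g) :
    ⁅FreeLieAlgebra.of ℤ i, u⁆ ∈ Nsup g := by
  have : Nsup g ≤ Submodule.comap (LieAlgebra.ad ℤ (L g) (FreeLieAlgebra.of ℤ i)) (Nsup g) := by
    refine iSup_le fun n => ?_
    intro v hv
    have : ⁅FreeLieAlgebra.of ℤ i, v⁆ ∈ Cn g (n + 1) := by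
      rw [Cn]
      exact Submodule.subset_span ⟨Pi.single i 1, v, hv, by rw [toL_single]⟩
    exact le_iSup (Cn g) (n + 1) this
  exact this hu

/-- The set of elements whose bracket preserves `Nsup`, as a Lie subalgebra. -/
def stab (g : ℕ) : LieSubalgebra ℤ (L g) where
  carrier := {x | ∀ u ∈ Nsup g, ⁅x, u⁆ ∈ Nsup g}
  add_mem' := fun {x y} hx hy u hu => by
    rw [add_lie]; exact Submodule.add_mem _ (hx u hu) (hy u hu)
  zero_mem' := fun u hu => by rw [zero_lie]; exact Submodule.zero_mem _
  smul_mem' := fun c x hx u hu => by rw [smul_lie]; exact Submodule.smul_mem _ c (hx u hu)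
  lie_mem' := fun {x y} hx hy u hu => by
    rw [lie_lie]
    exact Submodule.sub_mem _ (hx _ (hy u hu)) (hy _ (hx u hu))

lemma stab_eq_top (g : ℕ) (x : L g) : x ∈ stab g := by
  let f : L g →ₗ⁅ℤ⁆ stab g :=
    FreeLieAlgebra.lift ℤ (fun i => ⟨FreeLieAlgebra.of ℤ i, fun u hu => lie_of_mem_Nsup g i hu⟩)
  have : (stab g).incl.comp f = LieHom.id := by
    apply FreeLieAlgebra.hom_ext
    intro i
    show (stab g).incl (FreeLieAlgebra.lift ℤ _ (FreeLieAlgebra.of ℤ i)) = _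
    rw [FreeLieAlgebra.lift_of_apply]
    rfl
  have hx : (stab g).incl (f x) = x := by
    have := congrArg (fun F => F x) this
    simpa using this
  rw [← hx]
  exact (f x).2

/-- `Nsup` as a Lie ideal. -/
def NsupIdeal (g : ℕ) : LieIdeal ℤ (L g) where
  toSubmodule := Nsup g
  lie_mem := fun {x u} hu => stab_eq_top g x u hu

lemma ideal_le_Nsup (g : ℕ) : (omegaIdeal g).toSubmodule ≤ Nsup g := by
  have h : omegaIdeal g ≤ NsupIdeal g := by
    rw [omegaIdeal, LieSubmodule.lieSpan_le]
    rintro x rfl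
    exact le_iSup (Cn g) 0 (Submodule.subset_span rfl : omegaL g ∈ Cn g 0)
  exact h

end Stmt8Aux

/-- The bilinear bracket map `H × (⟨⟨ω⟩⟩ ∩ 𝔏₅) → 𝔏`, `(h, u) ↦ [h, u]`. -/
def brI56 (g : ℕ) :
    H g →ₗ[ℤ] ↥((omegaIdeal g).toSubmodule ⊓ homog g 5) →ₗ[ℤ] L g :=
  LinearMap.mk₂ ℤ (fun h u => ⁅toL g h, (u : L g)⁆)
    (fun h₁ h₂ u => by rw [map_add, add_lie])
    (fun c h u => by rw [map_smul, smul_lie])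
    (fun h u₁ u₂ => by simp only [Submodule.coe_add]; rw [lie_add])
    (fun c h u => by simp only [Submodule.coe_smul]; rw [lie_smul])

/-- The induced map `H ⊗ (⟨⟨ω⟩⟩ ∩ 𝔏₅) → 𝔏`, `h ⊗ u ↦ [h, u]`. -/
def brMap56 (g : ℕ) :
    (H g ⊗[ℤ] ↥((omegaIdeal g).toSubmodule ⊓ homog g 5)) →ₗ[ℤ] L g :=
  TensorProduct.lift (brI56 g)

lemma brMap56_tmul (g : ℕ) (h : H g) (u : ↥((omegaIdeal g).toSubmodule ⊓ homog g 5)) :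
    brMap56 g (h ⊗ₜ u) = ⁅toL g h, (u : L g)⁆ := by
  rw [brMap56]
  erw [TensorProduct.lift.tmul]
  rfl

set_option synthInstance.maxHeartbeats 1000000 in
theorem stmt8 (g : ℕ) (hg : 1 ≤ g) :
    LinearMap.range (brMap56 g) = (omegaIdeal g).toSubmodule ⊓ homog g 6 := by
  open Stmt8Aux in
  apply le_antisymm
  · rintro x ⟨t, rfl⟩
    induction t using TensorProduct.induction_on with
    | zero =>
      rw [map_zero]
      exact Submodule.zero_mem _
    | tmul h u =>
      rw [brMap56_tmul, Submodule.mem_inf, LieSubmodule.mem_toSubmodule]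
      obtain ⟨h1, h2⟩ := Submodule.mem_inf.mp u.2
      rw [LieSubmodule.mem_toSubmodule] at h1
      refine ⟨(omegaIdeal g).lie_mem h1, ?_⟩
      have h6 := lie_mem_homog (toL_mem g h) h2
      rwa [show 1 + 5 = 6 from rfl] at h6
    | add a b iha ihb =>
      rw [map_add]
      exact Submodule.add_mem _ iha ihb
  · intro x hx
    obtain ⟨hxI, hx6⟩ := Submodule.mem_inf.mp hx
    have hxN : x ∈ Nsup g := ideal_le_Nsup g hxI
    have key : Nsup g ≤ Submodule.comap (piK g 6) (LinearMap.range (brMap56 g)) := by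
      refine iSup_le fun n => ?_
      rcases eq_or_ne n 4 with rfl | hn
      · intro v hv
        have hv6 : v ∈ homog g 6 := by
          have := Cn_le_homog g 4 hv
          rwa [show 4 + 2 = 6 from rfl] at this
        have : piK g 6 v = v := by rw [piK_homog hv6, if_pos rfl]
        rw [Submodule.mem_comap, this]
        have hle : Cn g 4 ≤ LinearMap.range (brMap56 g) := by
          rw [Cn, Submodule.span_le]
          rintro y ⟨h, u, hu, rfl⟩
          have hu5 : u ∈ homog g 5 := by
            have := Cn_le_homog g 3 hu
            rwa [show 3 + 2 = 5 from rfl] at this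
          exact ⟨h ⊗ₜ ⟨u, Submodule.mem_inf.mpr ⟨Cn_le_ideal g 3 hu, hu5⟩⟩,
            brMap56_tmul g h _⟩
        exact hle hv
      · intro v hv
        have : piK g 6 v = 0 := by
          rw [piK_homog (Cn_le_homog g n hv), if_neg (by omega)]
        rw [Submodule.mem_comap, this]
        exact Submodule.zero_mem _
    have := key hxN
    rw [Submodule.mem_comap, piK_homog hx6, if_pos rfl] at this
    exact this

end
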